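/- Let c > 0, N > 0 and let T: [0,∞) → ℝ be a differentiable function with T(0) ∈ (2, 3], T(t) ≤ 3 for all t, and T'(t) ≥ −(4c/N)(T(t) − 2)(T(t) − 3) for all t ≥ 0. Then for all t ≥ 0, T(t) ≥ 3 + (T(0) − 3) e^{−4ct/N} / ((T(0) − 2) − (T(0) − 3) e^{−4ct/N}); in particular T(t) ∈ (2, 3] for all t and T(t) → 3 exponentially fast as t → ∞. -/

import Mathlib

open Real

private lemma gron_aux {f f' : ℝ → ℝ} {K δ : ℝ} (b : ℝ)
    (hf : ∀ t ∈ Set.Icc (0:ℝ) b, HasDerivAt f (f' t) t)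
    (h0 : f 0 ≤ δ)
    (bound : ∀ t ∈ Set.Ico (0:ℝ) b, f' t ≤ K * f t) :
    ∀ t ∈ Set.Icc (0:ℝ) b, f t ≤ δ * Real.exp (K * t) := by
  intro t ht
  have H := le_gronwallBound_of_liminf_deriv_right_le
    (f := f) (f' := f') (δ := δ) (K := K) (ε := 0) (a := 0) (b := b)
    (fun x hx => (hf x hx).continuousAt.continuousWithinAt)
    (fun x hx r hr => by
      have := ((hf x ⟨hx.1, hx.2.le⟩).hasDerivWithinAt (s := Set.Ici x)).liminf_right_slope_le hr
      simpa [slope_def_field, div_eq_inv_mul] using this)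
    h0 (fun x hx => by simpa using bound x hx) t ht
  simpa [gronwallBound_ε0] using H

theorem ode_comparison_consensus (c N : ℝ) (hc : 0 < c) (hN : 0 < N)
    (T T' : ℝ → ℝ)
    (hderiv : ∀ t ≥ 0, HasDerivAt T (T' t) t)
    (h0 : T 0 ∈ Set.Ioc (2 : ℝ) 3)
    (hle3 : ∀ t ≥ 0, T t ≤ 3)
    (hineq : ∀ t ≥ 0, T' t ≥ -(4 * c / N) * (T t - 2) * (T t - 3)) :
    (∀ t ≥ 0, T t ≥ 3 + (T 0 - 3) * Real.exp (-(4 * c * t) / N) /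
        ((T 0 - 2) - (T 0 - 3) * Real.exp (-(4 * c * t) / N))) ∧
    (∀ t ≥ 0, T t ∈ Set.Ioc (2 : ℝ) 3) ∧
    (∃ C k : ℝ, 0 < k ∧ ∀ t ≥ 0, |T t - 3| ≤ C * Real.exp (-k * t)) := by
  obtain ⟨h02, h03⟩ := h0
  have hlam : 0 < 4 * c / N := by positivity
  -- Step 1: T stays above 2
  have h2 : ∀ t ≥ (0:ℝ), 2 < T t := by
    intro b hb
    by_contra h
    push_neg at h
    set A : Set ℝ := Set.Icc 0 b ∩ T ⁻¹' Set.Iic 2 with hA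
    have hTc : ContinuousOn T (Set.Icc 0 b) :=
      fun x hx => ((hderiv x hx.1).continuousAt).continuousWithinAt
    have hclosed : IsClosed A := hTc.preimage_isClosed_of_isClosed isClosed_Icc isClosed_Iic
    have hne : A.Nonempty := ⟨b, ⟨hb, le_rfl⟩, h⟩
    have hbdd : BddBelow A := ⟨0, fun x hx => hx.1.1⟩
    have ht₁ : sInf A ∈ A := hclosed.csInf_mem hne hbdd
    set t₁ := sInf A with ht₁def
    have ht₁0 : 0 ≤ t₁ := ht₁.1.1
    have hlt : ∀ s ∈ Set.Ico (0:ℝ) t₁, 2 < T s := by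
      intro s hs
      by_contra hs2
      push_neg at hs2
      have : s ∈ A := ⟨⟨hs.1, hs.2.le.trans ht₁.1.2⟩, hs2⟩
      exact absurd (csInf_le hbdd this) (not_le.2 hs.2)
    have key := gron_aux (f := fun t => 2 - T t) (f' := fun t => -T' t) (K := 0)
      (δ := 2 - T 0) t₁
      (fun t ht => ((hderiv t ht.1).const_sub 2))
      le_rfl
      (fun t ht => by
        have h1 := hineq t ht.1
        have h2t := hlt t ht
        have h3t := hle3 t ht.1
        have : (0:ℝ) ≤ (4 * c / N) * ((T t - 2) * (3 - T t)) := by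
          apply mul_nonneg hlam.le
          apply mul_nonneg (by linarith) (by linarith)
        simp only [zero_mul]
        nlinarith)
      t₁ ⟨ht₁0, le_rfl⟩
    simp only [zero_mul, Real.exp_zero, mul_one] at key
    have : T t₁ ≤ 2 := ht₁.2
    linarith
  -- Step 2: Gronwall for u = (3 - T)/(T - 2)
  set u : ℝ → ℝ := fun t => (3 - T t) / (T t - 2) with hu_def
  have hkey : ∀ t ≥ (0:ℝ), u t ≤ u 0 * Real.exp (-(4 * c / N) * t) := by
    intro t ht
    refine gron_aux (f := u) (f' := fun s => -T' s / (T s - 2) ^ 2)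
      (K := -(4 * c / N)) (δ := u 0) t
      (fun s hs => ?_) le_rfl (fun s hs => ?_) t ⟨ht, le_rfl⟩
    · have hd : T s - 2 ≠ 0 := by have := h2 s hs.1; linarith
      have := (((hderiv s hs.1).const_sub 3).div ((hderiv s hs.1).sub_const 2) hd)
      refine this.congr_deriv ?_
      congr 1
      ring
    · have hds : 0 < T s - 2 := by have := h2 s hs.1; linarith
      have h1 := hineq s hs.1
      show -T' s / (T s - 2) ^ 2 ≤ -(4 * c / N) * ((3 - T s) / (T s - 2))
      have step : -T' s / (T s - 2) ^ 2 ≤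
          (-(4 * c / N) * ((T s - 2) * (3 - T s))) / (T s - 2) ^ 2 := by
        apply (div_le_div_iff_of_pos_right (by positivity)).mpr
        nlinarith
      refine step.trans (le_of_eq ?_)
      field_simp
  have hu0 : 0 ≤ u 0 := div_nonneg (by linarith) (by linarith)
  have hupos : ∀ t ≥ (0:ℝ), 0 ≤ u t := fun t ht =>
    div_nonneg (by linarith [hle3 t ht]) (by linarith [h2 t ht])
  -- main bound
  have main : ∀ t ≥ (0:ℝ), T t ≥ 3 + (T 0 - 3) * Real.exp (-(4 * c * t) / N) /
      ((T 0 - 2) - (T 0 - 3) * Real.exp (-(4 * c * t) / N)) := by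
    intro t ht
    have hE : Real.exp (-(4 * c * t) / N) = Real.exp (-(4 * c / N) * t) := by ring_nf
    set E := Real.exp (-(4 * c / N) * t) with hEdef
    have hEpos : 0 < E := Real.exp_pos _
    rw [hE]
    set w := u 0 * E with hw
    have hw0 : 0 ≤ w := mul_nonneg hu0 hEpos.le
    have hdt : 0 < T t - 2 := by linarith [h2 t ht]
    have hd0 : 0 < T 0 - 2 := by linarith
    have hut : u t ≤ w := hkey t ht
    have h3T : 3 - T t ≤ w * (T t - 2) := by
      have := mul_le_mul_of_nonneg_right hut hdt.le
      rwa [hu_def, div_mul_cancel₀ _ hdt.ne'] at this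
    have heq : (T 0 - 3) * E = -((T 0 - 2) * w) := by
      rw [hw, hu_def]
      field_simp
      ring
    have hD : 0 < (T 0 - 2) - (T 0 - 3) * E := by
      rw [heq]
      nlinarith
    have hdiv : (T 0 - 3) * E / ((T 0 - 2) - (T 0 - 3) * E) ≤ T t - 3 := by
      rw [div_le_iff₀ hD]
      nlinarith [mul_le_mul_of_nonneg_left h3T hd0.le]
    linarith
  refine ⟨main, fun t ht => ⟨h2 t ht, hle3 t ht⟩, (3 - T 0) / (T 0 - 2), 4 * c / N, hlam, ?_⟩
  intro t ht
  have hdt : 0 < T t - 2 := by linarith [h2 t ht]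
  have h3t := hle3 t ht
  have h1 : |T t - 3| = 3 - T t := by rw [abs_of_nonpos (by linarith)]; ring
  have h2' : 3 - T t ≤ u t := by
    have : u t * (T t - 2) ≤ u t * 1 :=
      mul_le_mul_of_nonneg_left (by linarith) (hupos t ht)
    rw [hu_def] at this ⊢
    calc (3 - T t) = (3 - T t) / (T t - 2) * (T t - 2) := by
          rw [div_mul_cancel₀ _ hdt.ne']
      _ ≤ (3 - T t) / (T t - 2) * 1 := this
      _ = (3 - T t) / (T t - 2) := mul_one _
  have h3 := hkey t ht
  rw [h1]
  calc 3 - T t ≤ u t := h2'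
    _ ≤ u 0 * Real.exp (-(4 * c / N) * t) := h3
    _ = (3 - T 0) / (T 0 - 2) * Real.exp (-(4 * c / N) * t) := rfl
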